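/- arXiv:1410.7165 — 3 statements merged into one kernel-verified Lean document; each statement's English description precedes it below -/
import Mathlib

section
/- There exists a symmetric positive definite matrix J such that the spectral radius of the entrywise absolute value of I − J is at least 1 (i.e., positive definiteness does not imply walk-summability). -/
open scoped ENNReal NNReal

noncomputable def Jm : Matrix (Fin 3) (Fin 3) ℝ :=
  !![1, -(3/5), 3/5; -(3/5), 1, -(3/5); 3/5, -(3/5), 1]

theorem stmt_5 :
    ∃ (n : ℕ) (J : Matrix (Fin n) (Fin n) ℝ), J.IsSymm ∧ J.PosDef ∧
      1 ≤ spectralRadius ℂ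
        (Matrix.of fun i j : Fin n =>
          ((|((1 : Matrix (Fin n) (Fin n) ℝ) - J) i j| : ℝ) : ℂ)) := by
  refine ⟨3, Jm, ?_, ?_, ?_⟩
  · ext i j
    fin_cases i <;> fin_cases j <;> simp [Jm, Matrix.IsSymm]
  · constructor
    · ext i j
      fin_cases i <;> fin_cases j <;> simp [Jm]
    · intro x hx
      have h0 : 0 < x 0 ^ 2 + x 1 ^ 2 + x 2 ^ 2 := by
        by_contra h
        push_neg at h
        apply hx
        have e0 : x 0 = 0 := by nlinarith [sq_nonneg (x 0), sq_nonneg (x 1), sq_nonneg (x 2)]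
        have e1 : x 1 = 0 := by nlinarith [sq_nonneg (x 0), sq_nonneg (x 1), sq_nonneg (x 2)]
        have e2 : x 2 = 0 := by nlinarith [sq_nonneg (x 0), sq_nonneg (x 1), sq_nonneg (x 2)]
        ext i
        fin_cases i <;> simpa using ‹_›
      have hq : dotProduct x (Jm.mulVec x) = (2/5) * (x 0 ^ 2 + x 1 ^ 2 + x 2 ^ 2)
          + (3/5) * (x 0 - x 1 + x 2)^2 := by
        simp [Jm, dotProduct, Matrix.mulVec, Fin.sum_univ_three]
        ring
      have hs : (x.sum fun i xi => x.sum fun j xj => star xi * Jm i j * xj) = dotProduct x (Jm.mulVec x) := by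
        simp [Finsupp.sum_fintype, Jm, dotProduct, Matrix.mulVec, Fin.sum_univ_three]
        ring
      rw [hs]
      rw [hq]
      nlinarith [sq_nonneg (x 0 - x 1 + x 2)]
  · have hA : (Matrix.of fun i j : Fin 3 =>
        ((|((1 : Matrix (Fin 3) (Fin 3) ℝ) - Jm) i j| : ℝ) : ℂ)) =
        !![0, 3/5, 3/5; 3/5, 0, 3/5; 3/5, 3/5, 0] := by
      ext i j
      fin_cases i <;> fin_cases j <;>
        simp [Jm, Matrix.one_apply, Fin.ext_iff, Matrix.vecHead, Matrix.vecTail] <;> norm_num [abs_of_nonneg]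
    rw [hA]
    have hmem : (6/5 : ℂ) ∈ spectrum ℂ
        (!![0, 3/5, 3/5; 3/5, 0, 3/5; 3/5, 3/5, 0] : Matrix (Fin 3) (Fin 3) ℂ) := by
      rw [spectrum.mem_iff, Matrix.isUnit_iff_isUnit_det]
      have hd : ((algebraMap ℂ (Matrix (Fin 3) (Fin 3) ℂ)) (6/5) -
          !![0, 3/5, 3/5; 3/5, 0, 3/5; 3/5, 3/5, 0]).det = 0 := by
        simp [Matrix.det_fin_three, Matrix.algebraMap_matrix_apply, Fin.ext_iff, Matrix.vecHead, Matrix.vecTail]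
        norm_num
      rw [hd]
      simp
    rw [spectralRadius]
    refine le_trans ?_ (le_iSup₂_of_le (6/5 : ℂ) hmem le_rfl)
    have hn : ‖(6/5 : ℂ)‖₊ = (6/5 : ℝ≥0) := by
      ext
      rw [coe_nnnorm, show (6/5:ℂ) = ((6/5:ℝ):ℂ) by norm_num, Complex.norm_real]
      norm_num
    rw [hn]
    rw [show (1 : ℝ≥0∞) = ((1 : ℝ≥0) : ℝ≥0∞) from rfl, ENNReal.coe_le_coe]
    rw [← NNReal.coe_le_coe]
    norm_num
end

section
/- For a real symmetric n×n matrix J, if the spectral radius of the entrywise absolute value of R = I − J is strictly less than 1, then J is positive definite. -/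
open Filter Matrix Finset
open scoped ENNReal NNReal Topology

attribute [local instance] Matrix.linftyOpNormedRing Matrix.linftyOpNormedAlgebra

private lemma abs_pow_entry_le {n : ℕ} (R : Matrix (Fin n) (Fin n) ℝ) (m : ℕ) (i j : Fin n) :
    |(R ^ m) i j| ≤ ((Matrix.of fun i j => |R i j|) ^ m) i j := by
  induction m generalizing i j with
  | zero =>
      simp only [pow_zero, Matrix.one_apply]
      split <;> simp
  | succ m ih =>
      rw [pow_succ, pow_succ, Matrix.mul_apply, Matrix.mul_apply]
      calc |∑ k, (R ^ m) i k * R k j| ≤ ∑ k, |(R ^ m) i k * R k j| :=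
            Finset.abs_sum_le_sum_abs _ _
        _ ≤ ∑ k, ((Matrix.of fun i j => |R i j|) ^ m) i k *
              (Matrix.of fun i j => |R i j|) k j := by
            refine Finset.sum_le_sum fun k _ => ?_
            rw [abs_mul]
            exact mul_le_mul_of_nonneg_right (ih i k) (abs_nonneg _)

theorem stmt_6 (n : ℕ) (J : Matrix (Fin n) (Fin n) ℝ) (hsymm : J.IsSymm)
    (hρ : spectralRadius ℂ
        (Matrix.of fun i j : Fin n =>
          ((|((1 : Matrix (Fin n) (Fin n) ℝ) - J) i j| : ℝ) : ℂ)) < 1) :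
    J.PosDef := by
  classical
  set R : Matrix (Fin n) (Fin n) ℝ := 1 - J with hRdef
  set B : Matrix (Fin n) (Fin n) ℝ := Matrix.of fun i j => |R i j| with hBdef
  set A : Matrix (Fin n) (Fin n) ℂ :=
    Matrix.of fun i j : Fin n =>
      ((|((1 : Matrix (Fin n) (Fin n) ℝ) - J) i j| : ℝ) : ℂ) with hAdef
  have hρA : spectralRadius ℂ A < 1 := hρ
  have hAB : A = Complex.ofRealHom.mapMatrix B := by
    ext i j
    simp [hAdef, hBdef, hRdef]
  haveI : CompleteSpace (Matrix (Fin n) (Fin n) ℂ) := FiniteDimensional.complete ℂ _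
  have hGel := spectrum.pow_nnnorm_pow_one_div_tendsto_nhds_spectralRadius A
  obtain ⟨c, hc1, hc2⟩ := exists_between hρA
  have hcne : c ≠ ⊤ := (hc2.trans_le le_top).ne
  have hctr : c.toReal < 1 := by
    have := (ENNReal.toReal_lt_toReal hcne ENNReal.one_ne_top).mpr hc2
    simpa using this
  have hev : ∀ᶠ m : ℕ in atTop, (‖A ^ m‖₊ : ℝ≥0∞) ^ (1 / (m : ℝ)) < c :=
    hGel.eventually_lt_const hc1
  have hpow : ∀ᶠ m : ℕ in atTop, ‖A ^ m‖ ≤ c.toReal ^ m := by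
    filter_upwards [hev, Filter.eventually_ge_atTop 1] with m hm hm1
    have hm0 : (m : ℝ) ≠ 0 := by positivity
    have h1 : ((‖A ^ m‖₊ : ℝ≥0∞) ^ (1 / (m : ℝ))) ^ (m : ℝ) < c ^ (m : ℝ) :=
      ENNReal.rpow_lt_rpow hm (by positivity)
    rw [← ENNReal.rpow_mul, one_div_mul_cancel hm0, ENNReal.rpow_one] at h1
    have hfin : c ^ (m : ℝ) ≠ ⊤ := ENNReal.rpow_ne_top_of_nonneg (by positivity) hcne
    have h2 := ENNReal.toReal_mono hfin h1.le
    rw [ENNReal.coe_toReal] at h2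
    calc ‖A ^ m‖ = (‖A ^ m‖₊ : ℝ) := rfl
      _ ≤ (c ^ (m : ℝ)).toReal := h2
      _ = c.toReal ^ (m : ℝ) := by rw [← ENNReal.toReal_rpow]
      _ = c.toReal ^ m := Real.rpow_natCast _ m
  have entry_le : ∀ (M : Matrix (Fin n) (Fin n) ℂ) (i j : Fin n), ‖M i j‖ ≤ ‖M‖ := by
    intro M i j
    have : ‖M i j‖₊ ≤ ‖M‖₊ := by
      rw [Matrix.linfty_opNNNorm_def]
      exact le_trans
        (Finset.single_le_sum (f := fun k => ‖M i k‖₊) (fun k _ => zero_le) (Finset.mem_univ j))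
        (Finset.le_sup (f := fun i => ∑ j, ‖M i j‖₊) (Finset.mem_univ i))
    exact this
  have hRm : ∀ (m : ℕ) (i j : Fin n), |(R ^ m) i j| ≤ ‖A ^ m‖ := by
    intro m i j
    have h1 : |(R ^ m) i j| ≤ (B ^ m) i j := abs_pow_entry_le R m i j
    have h2 : (A ^ m) i j = (((B ^ m) i j : ℝ) : ℂ) := by
      rw [hAB, ← map_pow, RingHom.mapMatrix_apply]
      simp [Matrix.map_apply]
    have h3 : (B ^ m) i j ≤ ‖(A ^ m) i j‖ := by
      rw [h2, Complex.norm_real, Real.norm_eq_abs]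
      exact le_abs_self _
    exact h1.trans (h3.trans (entry_le _ i j))
  have hRsymm : ∀ m : ℕ, (R ^ m)ᵀ = R ^ m := by
    intro m
    rw [Matrix.transpose_pow]
    congr 1
    rw [hRdef, Matrix.transpose_sub, Matrix.transpose_one, hsymm]
  rw [Matrix.posDef_iff_dotProduct_mulVec]
  constructor
  · show Jᴴ = J
    ext i j
    simpa using congrFun (congrFun hsymm i) j
  · intro x hx
    have hxx : (0 : ℝ) < x ⬝ᵥ x := by
      obtain ⟨i, hi⟩ := Function.ne_iff.mp hx
      have : (0 : ℝ) < ∑ k, x k * x k :=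
        Finset.sum_pos' (fun k _ => mul_self_nonneg _)
          ⟨i, Finset.mem_univ i, mul_self_pos.mpr hi⟩
      simpa [dotProduct] using this
    set s : ℝ := x ⬝ᵥ x with hsdef
    set f : ℕ → ℝ := fun m => x ⬝ᵥ ((R ^ m) *ᵥ x) with hfdef
    have hC : ∀ m, |f m| ≤ (∑ i, ∑ j, |x i| * |x j|) * ‖A ^ m‖ := by
      intro m
      have h : |f m| ≤ ∑ i, ∑ j, |x i| * |x j| * ‖A ^ m‖ := by
        calc |f m| = |∑ i, ∑ j, x i * ((R ^ m) i j * x j)| := by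
              simp [hfdef, dotProduct, Matrix.mulVec, Finset.mul_sum]
          _ ≤ ∑ i, |∑ j, x i * ((R ^ m) i j * x j)| := Finset.abs_sum_le_sum_abs _ _
          _ ≤ ∑ i, ∑ j, |x i * ((R ^ m) i j * x j)| :=
              Finset.sum_le_sum fun i _ => Finset.abs_sum_le_sum_abs _ _
          _ ≤ ∑ i, ∑ j, |x i| * |x j| * ‖A ^ m‖ := by
              refine Finset.sum_le_sum fun i _ => Finset.sum_le_sum fun j _ => ?_
              rw [abs_mul, abs_mul]
              calc |x i| * (|(R ^ m) i j| * |x j|) ≤ |x i| * (‖A ^ m‖ * |x j|) := by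
                    gcongr
                    exact hRm m i j
                _ = |x i| * |x j| * ‖A ^ m‖ := by ring
      calc |f m| ≤ ∑ i, ∑ j, |x i| * |x j| * ‖A ^ m‖ := h
        _ = (∑ i, ∑ j, |x i| * |x j|) * ‖A ^ m‖ := by
            simp [Finset.sum_mul]
    have hflim : Tendsto f atTop (𝓝 0) := by
      have hgeo : Tendsto (fun m : ℕ => (∑ i, ∑ j, |x i| * |x j|) * c.toReal ^ m)
          atTop (𝓝 0) := by
        have h0 := tendsto_pow_atTop_nhds_zero_of_lt_one ENNReal.toReal_nonneg hctr
        simpa using h0.const_mul (∑ i, ∑ j, |x i| * |x j|)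
      refine squeeze_zero_norm' ?_ hgeo
      filter_upwards [hpow] with m hm
      calc ‖f m‖ ≤ (∑ i, ∑ j, |x i| * |x j|) * ‖A ^ m‖ := by
            simpa [Real.norm_eq_abs] using hC m
        _ ≤ (∑ i, ∑ j, |x i| * |x j|) * c.toReal ^ m := by
            have hCnn : (0 : ℝ) ≤ ∑ i, ∑ j, |x i| * |x j| := by positivity
            exact mul_le_mul_of_nonneg_left hm hCnn
    have hCS : ∀ m : ℕ, f m ^ 2 ≤ s * f (2 * m) := by
      intro m
      have hy : f (2 * m) = (R ^ m *ᵥ x) ⬝ᵥ (R ^ m *ᵥ x) := by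
        show x ⬝ᵥ (R ^ (2 * m) *ᵥ x) = _
        rw [two_mul, pow_add, ← Matrix.mulVec_mulVec, Matrix.dotProduct_mulVec,
          ← Matrix.mulVec_transpose, hRsymm]
      have key : (∑ i, x i * (R ^ m *ᵥ x) i) ^ 2 ≤
          (∑ i, x i ^ 2) * ∑ i, (R ^ m *ᵥ x) i ^ 2 :=
        Finset.sum_mul_sq_le_sq_mul_sq _ _ _
      calc f m ^ 2 = (∑ i, x i * (R ^ m *ᵥ x) i) ^ 2 := by
            simp [hfdef, dotProduct]
        _ ≤ (∑ i, x i ^ 2) * ∑ i, (R ^ m *ᵥ x) i ^ 2 := key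
        _ = s * f (2 * m) := by
            rw [hy, hsdef]
            simp [dotProduct, sq]
    show 0 < dotProduct (star x) (J *ᵥ x)
    rw [star_trivial]
    by_contra hq
    push_neg at hq
    have hf1 : s ≤ f 1 := by
      have h : f 1 = s - x ⬝ᵥ (J *ᵥ x) := by
        simp [hfdef, hsdef, hRdef, Matrix.sub_mulVec, Matrix.one_mulVec,
          dotProduct_sub]
      rw [h]
      linarith
    have hstep : ∀ k : ℕ, s ≤ f (2 ^ k) := by
      intro k
      induction k with
      | zero => simpa using hf1
      | succ k ih =>
          have h2 : (2 : ℕ) ^ (k + 1) = 2 * 2 ^ k := by ring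
          rw [h2]
          nlinarith [hCS (2 ^ k), sq_nonneg (f (2 ^ k) - s)]
    have hsub : Tendsto (fun k : ℕ => f (2 ^ k)) atTop (𝓝 0) :=
      hflim.comp (tendsto_atTop_mono (fun k => (Nat.lt_two_pow_self (n := k)).le) tendsto_id)
    obtain ⟨k, hk⟩ := (hsub.eventually_lt_const hxx).exists
    exact absurd (hstep k) (not_le.mpr hk)
end

section
/- Let J be a real symmetric positive definite n×n matrix whose associated graph is a tree T (J_{ij} ≠ 0 iff {i,j} is an edge of T or i=j). For a vertex α with neighbor set N(α): (J⁻¹)_{αα} = (J_{αα} − ∑_{β∈N(α)} J_{αβ}² · γ_{β∖α})⁻¹, where γ_{β∖α} := ((J with row/column α removed)⁻¹)_{ββ}, and moreover γ_{β∖α} depends only on the subtree of T∖{α} containing β. -/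
open Matrix

/-- A principal submatrix (via an injective index map) of a positive definite real matrix is
positive definite. -/
theorem posDef_submatrix_of_injective {m n : Type*} [Fintype m] [Fintype n] [DecidableEq m]
    [DecidableEq n] {M : Matrix n n ℝ} (hM : M.PosDef) (e : m → n)
    (he : Function.Injective e) : (M.submatrix e e).PosDef := by
  refine Matrix.PosDef.of_dotProduct_mulVec_pos (hM.1.submatrix e) fun x hx => ?_
  classical
  set y : n → ℝ := fun j => ∑ i, if j = e i then x i else 0 with hy
  have key : ∀ c : n → ℝ, (∑ j, y j * c j) = ∑ i, x i * c (e i) := by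
    intro c
    simp only [hy]
    simp_rw [Finset.sum_mul, ite_mul, zero_mul]
    rw [Finset.sum_comm]
    simp
  have hyx : ∀ k, y (e k) = x k := by
    intro k
    simp only [hy]
    rw [Finset.sum_eq_single_of_mem k (Finset.mem_univ k)]
    · rw [if_pos rfl]
    · intro i _ hik
      exact if_neg fun h => hik (he h.symm)
  have hy0 : y ≠ 0 := by
    obtain ⟨k, hk⟩ := Function.ne_iff.mp hx
    intro h
    exact hk (by rw [← hyx k, h]; rfl)
  have hform : star x ⬝ᵥ (M.submatrix e e) *ᵥ x = star y ⬝ᵥ M *ᵥ y := by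
    have hMy : ∀ j, (M *ᵥ y) j = ∑ i', M j (e i') * x i' := by
      intro j
      show ∑ k, M j k * y k = _
      simp_rw [fun k => mul_comm (M j k) (y k)]
      rw [key fun k => M j k]
      simp_rw [mul_comm]
    show ∑ i, star x i * ((M.submatrix e e) *ᵥ x) i = ∑ j, star y j * (M *ᵥ y) j
    simp only [star_trivial]
    calc ∑ i, x i * ((M.submatrix e e) *ᵥ x) i
        = ∑ i, x i * ∑ i', M (e i) (e i') * x i' := by
          refine Finset.sum_congr rfl fun i _ => ?_
          congr 1
      _ = ∑ j, y j * (M *ᵥ y) j := by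
          rw [key fun j => (M *ᵥ y) j]
          refine Finset.sum_congr rfl fun i _ => ?_
          rw [hMy]
  rw [hform]
  exact hM.dotProduct_mulVec_pos hy0

/-- If a positive definite matrix vanishes between a set and its complement, its inverse does
too (off-block entries vanish), and on the block indexed by `p` the inverse is the inverse of
the corresponding submatrix. -/
theorem inv_block_diag {m : Type*} [Fintype m] [DecidableEq m]
    {M : Matrix m m ℝ} (hM : M.PosDef) (p : m → Prop) [DecidablePred p]
    (h0 : ∀ i j, p i → ¬ p j → M i j = 0) (h0' : ∀ i j, ¬ p i → p j → M i j = 0) :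
    (∀ (i j : m) (hi : p i) (hj : p j),
      M⁻¹ i j = (M.submatrix (Subtype.val : {x // p x} → m) Subtype.val)⁻¹ ⟨i, hi⟩ ⟨j, hj⟩) ∧
    (∀ i j : m, p i → ¬ p j → M⁻¹ i j = 0) := by
  set A := M.submatrix (Subtype.val : {x // p x} → m) Subtype.val with hA
  set D := M.submatrix (Subtype.val : {x // ¬ p x} → m) Subtype.val with hD
  have hApd : A.PosDef := posDef_submatrix_of_injective hM _ Subtype.val_injective
  have hDpd : D.PosDef := posDef_submatrix_of_injective hM _ Subtype.val_injective
  set e : {x // p x} ⊕ {x // ¬ p x} ≃ m := Equiv.sumCompl p with he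
  have hsub : M.submatrix e e = Matrix.fromBlocks A 0 0 D := by
    ext i j
    rcases i with i | i <;> rcases j with j | j
    · rfl
    · exact h0 i.val j.val i.2 j.2
    · exact h0' i.val j.val i.2 j.2
    · rfl
  have hinv : (M.submatrix e e)⁻¹ = Matrix.fromBlocks A⁻¹ 0 0 D⁻¹ := by
    rw [hsub, Matrix.inv_fromBlocks_zero₁₂_of_isUnit_iff A 0 D
      (by simp [hApd.isUnit, hDpd.isUnit])]
    simp
  have hMe : ∀ i j, M⁻¹ (e i) (e j) = Matrix.fromBlocks A⁻¹ 0 0 D⁻¹ i j := by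
    intro i j
    rw [← hinv, Matrix.inv_submatrix_equiv]
    rfl
  constructor
  · intro i j hi hj
    exact hMe (Sum.inl ⟨i, hi⟩) (Sum.inl ⟨j, hj⟩)
  · intro i j hi hj
    exact hMe (Sum.inl ⟨i, hi⟩) (Sum.inr ⟨j, hj⟩)

/-- In a tree, two distinct neighbors of `α` are not connected in the graph with `α` removed. -/
theorem tree_no_path {n : ℕ} {T : SimpleGraph (Fin n)} (hT : T.IsTree) {α : Fin n}
    {x y : {i : Fin n // i ≠ α}} (hx : T.Adj α x.val) (hy : T.Adj α y.val) (hxy : x ≠ y) :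
    ¬ (SimpleGraph.comap (Subtype.val : {i : Fin n // i ≠ α} → Fin n) T).Reachable x y := by
  intro h
  obtain ⟨w⟩ := h
  let emb : (SimpleGraph.comap (Subtype.val : {i : Fin n // i ≠ α} → Fin n) T) ↪g T :=
    SimpleGraph.Embedding.comap (Function.Embedding.subtype _) T
  let w' : T.Walk x.val y.val := w.map emb.toHom
  have hα : α ∉ w'.support := by
    rw [show w'.support = w.support.map emb.toHom from SimpleGraph.Walk.support_map emb.toHom w]
    intro hmem
    obtain ⟨z, _, hz'⟩ := List.mem_map.mp hmem
    exact z.2 hz'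
  set P := w'.toPath with hP
  have hαP : α ∉ P.val.support := fun hm => hα (SimpleGraph.Walk.support_toPath_subset w' hm)
  have hxyv : x.val ≠ y.val := fun h => hxy (Subtype.ext h)
  let Q : T.Walk x.val y.val :=
    SimpleGraph.Walk.cons hx.symm (SimpleGraph.Walk.cons hy SimpleGraph.Walk.nil)
  have hQ : Q.IsPath := by
    simp only [Q, SimpleGraph.Walk.isPath_def, SimpleGraph.Walk.support_cons,
      SimpleGraph.Walk.support_nil]
    simp [List.nodup_cons, x.2, hxyv, Ne.symm y.2]
  have huniq := (hT.existsUnique_path x.val y.val).unique P.2 hQ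
  rw [huniq] at hαP
  apply hαP
  simp [Q]

open Classical in
/-- Gaussian belief propagation on a tree: the cycle-resummation formula for `(J⁻¹)_{αα}`
(self-loop plus backtracks to the neighbors of `α`), and the fact that the quantity
`γ_{β∖α} = ((J_{∖α})⁻¹)_{ββ}` only depends on the connected component (subtree) of
`T ∖ {α}` containing `β`. -/
theorem stmt_18 (n : ℕ) (T : SimpleGraph (Fin n)) (hT : T.IsTree)
    (J : Matrix (Fin n) (Fin n) ℝ) (hJ : J.PosDef)
    (hsp : ∀ i j : Fin n, i ≠ j → (J i j ≠ 0 ↔ T.Adj i j)) (α : Fin n) :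
    J⁻¹ α α =
      (J α α -
        ∑ β ∈ Finset.univ.filter (fun β : {i : Fin n // i ≠ α} => T.Adj α β.val),
          J α β.val ^ 2 *
            (J.submatrix (fun x : {i : Fin n // i ≠ α} => x.val) (fun x => x.val))⁻¹ β β)⁻¹ ∧
    ∀ β : {i : Fin n // i ≠ α}, T.Adj α β.val →
      (J.submatrix (fun x : {i : Fin n // i ≠ α} => x.val) (fun x => x.val))⁻¹ β β =
        (J.submatrix
            (fun y : {x : {i : Fin n // i ≠ α} //
                (SimpleGraph.comap Subtype.val T).Reachable x β} => y.val.val)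
            (fun y : {x : {i : Fin n // i ≠ α} //
                (SimpleGraph.comap Subtype.val T).Reachable x β} => y.val.val))⁻¹
          ⟨β, SimpleGraph.Reachable.refl β⟩ ⟨β, SimpleGraph.Reachable.refl β⟩ := by
  classical
  set A := J.submatrix (fun x : {i : Fin n // i ≠ α} => x.val)
      (fun x : {i : Fin n // i ≠ α} => x.val) with hAdef
  have hApd : A.PosDef := by
    rw [hAdef]
    exact posDef_submatrix_of_injective hJ _ Subtype.val_injective
  have hzero : ∀ (β i j : {i : Fin n // i ≠ α}),
      ¬ ((SimpleGraph.comap (Subtype.val : {i : Fin n // i ≠ α} → Fin n) T).Reachable i β ↔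
          (SimpleGraph.comap (Subtype.val : {i : Fin n // i ≠ α} → Fin n) T).Reachable j β) →
      A i j = 0 := by
    intro β i j hne
    by_contra hA
    rw [hAdef, Matrix.submatrix_apply] at hA
    rcases eq_or_ne i j with rfl | hij
    · exact hne Iff.rfl
    have hadj : (SimpleGraph.comap (Subtype.val : {i : Fin n // i ≠ α} → Fin n) T).Adj i j :=
      (hsp i.val j.val (fun h => hij (Subtype.ext h))).mp hA
    exact hne ⟨fun h => hadj.symm.reachable.trans h, fun h => hadj.reachable.trans h⟩
  have hblock := fun (β : {i : Fin n // i ≠ α}) =>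
    inv_block_diag hApd
      (fun z => (SimpleGraph.comap (Subtype.val : {i : Fin n // i ≠ α} → Fin n) T).Reachable z β)
      (fun i j hi hj => hzero β i j (fun hiff => hj (hiff.mp hi)))
      (fun i j hi hj => hzero β i j (fun hiff => hi (hiff.mpr hj)))
  -- Part 2
  have main2 : ∀ β : {i : Fin n // i ≠ α}, T.Adj α β.val →
      A⁻¹ β β =
        (J.submatrix
            (fun y : {x : {i : Fin n // i ≠ α} //
                (SimpleGraph.comap Subtype.val T).Reachable x β} => y.val.val)
            (fun y : {x : {i : Fin n // i ≠ α} //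
                (SimpleGraph.comap Subtype.val T).Reachable x β} => y.val.val))⁻¹
          ⟨β, SimpleGraph.Reachable.refl β⟩ ⟨β, SimpleGraph.Reachable.refl β⟩ := by
    intro β _
    have h := (hblock β).1 β β (SimpleGraph.Reachable.refl β) (SimpleGraph.Reachable.refl β)
    rw [h, hAdef, Matrix.submatrix_submatrix]
    rfl
  -- cross terms of the inverse vanish between distinct neighbors of α
  have hK0 : ∀ x y : {i : Fin n // i ≠ α}, T.Adj α x.val → T.Adj α y.val → y ≠ x →
      A⁻¹ y x = 0 := by
    intro x y hx hy hyx
    exact (hblock y).2 y x (SimpleGraph.Reachable.refl y)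
      (tree_no_path hT hx hy (Ne.symm hyx))
  -- Part 1: Schur complement computation
  have hsym : ∀ i j, J i j = J j i := by
    intro i j
    rw [← hJ.1.apply i j, star_trivial]
  letI : Unique {i : Fin n // ¬ i ≠ α} :=
    ⟨⟨⟨α, not_ne_iff.mpr rfl⟩⟩, fun x => Subtype.ext (not_ne_iff.mp x.2)⟩
  set e : {i : Fin n // i ≠ α} ⊕ {i : Fin n // ¬ i ≠ α} ≃ Fin n :=
    Equiv.sumCompl (fun i => i ≠ α) with he
  set B : Matrix {i : Fin n // i ≠ α} {i : Fin n // ¬ i ≠ α} ℝ :=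
    Matrix.of fun i _ => J i.val α with hB
  set C : Matrix {i : Fin n // ¬ i ≠ α} {i : Fin n // i ≠ α} ℝ :=
    Matrix.of fun _ j => J α j.val with hC
  set D : Matrix {i : Fin n // ¬ i ≠ α} {i : Fin n // ¬ i ≠ α} ℝ :=
    Matrix.of fun _ _ => J α α with hD
  have hsub : J.submatrix e e = Matrix.fromBlocks A B C D := by
    ext i j
    rcases i with i | i <;> rcases j with j | j
    · rfl
    · show J i.val j.val = J i.val α
      rw [not_ne_iff.mp j.2]
    · show J i.val j.val = J α j.val
      rw [not_ne_iff.mp i.2]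
    · show J i.val j.val = J α α
      rw [not_ne_iff.mp i.2, not_ne_iff.mp j.2]
  letI : Invertible A := hApd.isUnit.invertible
  letI : Invertible J := hJ.isUnit.invertible
  letI : Invertible (J.submatrix e e) := Matrix.submatrixEquivInvertible J e e
  letI hFB : Invertible (Matrix.fromBlocks A B C D) :=
    (Matrix.submatrixEquivInvertible J e e).copy _ hsub.symm
  letI hSchur : Invertible (D - C * ⅟A * B) := Matrix.invertibleOfFromBlocks₁₁Invertible A B C D
  have hinvM' : (J.submatrix e e)⁻¹ =
      Matrix.fromBlocks (⅟A + ⅟A * B * ⅟(D - C * ⅟A * B) * C * ⅟A)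
        (-(⅟A * B * ⅟(D - C * ⅟A * B))) (-(⅟(D - C * ⅟A * B) * C * ⅟A))
        (⅟(D - C * ⅟A * B)) := by
    rw [hsub, ← Matrix.invOf_eq_nonsing_inv, Matrix.invOf_fromBlocks₁₁_eq]
  have h1 : J⁻¹ α α = ⅟(D - C * ⅟A * B) default default := by
    have h2 : J⁻¹ α α = (J.submatrix e e)⁻¹ (Sum.inr default) (Sum.inr default) := by
      rw [Matrix.inv_submatrix_equiv]
      rfl
    rw [h2, hinvM']
    rfl
  have hXdd : ⅟(D - C * ⅟A * B) default default =
      ((D - C * ⅟A * B) default default)⁻¹ := by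
    have hmul : ⅟(D - C * ⅟A * B) default default * (D - C * ⅟A * B) default default = 1 := by
      have := congrArg (fun M : Matrix _ _ ℝ => M default default)
        (invOf_mul_self (D - C * ⅟A * B))
      simpa [Matrix.mul_apply, Matrix.one_apply] using this
    exact eq_inv_of_mul_eq_one_left hmul
  have hCAB : (C * ⅟A * B) default default =
      ∑ β ∈ Finset.univ.filter (fun β : {i : Fin n // i ≠ α} => T.Adj α β.val),
        J α β.val ^ 2 * A⁻¹ β β := by
    rw [Matrix.invOf_eq_nonsing_inv]
    have e1 : (C * A⁻¹ * B) default default =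
        ∑ x : {i : Fin n // i ≠ α}, ∑ y : {i : Fin n // i ≠ α},
          J α y.val * A⁻¹ y x * J x.val α := by
      simp only [Matrix.mul_apply, Finset.sum_mul, hB, hC, Matrix.of_apply]
    rw [e1]
    have e2 : ∀ x : {i : Fin n // i ≠ α},
        (∑ y : {i : Fin n // i ≠ α}, J α y.val * A⁻¹ y x * J x.val α) =
          J α x.val * A⁻¹ x x * J x.val α := by
      intro x
      refine Finset.sum_eq_single_of_mem x (Finset.mem_univ x) (fun y _ hyx => ?_)
      by_cases hy : T.Adj α y.val
      · by_cases hx : T.Adj α x.val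
        · rw [hK0 x y hx hy hyx, mul_zero, zero_mul]
        · have hx0 : J x.val α = 0 :=
            not_not.mp (mt (hsp x.val α x.2).mp (fun h => hx h.symm))
          rw [hx0, mul_zero]
      · have hy0 : J α y.val = 0 :=
          not_not.mp (mt (hsp α y.val (Ne.symm y.2)).mp hy)
        rw [hy0, zero_mul, zero_mul]
    rw [Finset.sum_congr rfl fun x _ => e2 x]
    rw [eq_comm]
    rw [Finset.sum_filter_of_ne (fun x _ hne => ?_)]
    · refine Finset.sum_congr rfl fun x _ => ?_
      rw [hsym x.val α]
      ring
    · by_contra hx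
      apply hne
      have hx0 : J α x.val = 0 := not_not.mp (mt (hsp α x.val (Ne.symm x.2)).mp hx)
      rw [hx0]
      ring
  have main1 : J⁻¹ α α =
      (J α α -
        ∑ β ∈ Finset.univ.filter (fun β : {i : Fin n // i ≠ α} => T.Adj α β.val),
          J α β.val ^ 2 * A⁻¹ β β)⁻¹ := by
    rw [h1, hXdd, ← hCAB]
    rfl
  exact ⟨main1, main2⟩
end
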